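/- arXiv:0910.5446 — 3 statements merged into one kernel-verified Lean document; each statement's English description precedes it below -/
import Mathlib

section
/- If m: Γ̂ → ℕ satisfies the consistency equation m(ω) = Σ_{α*(ζ)=ω} m(ζ) a.e., α* is ergodic with respect to Haar measure, and m vanishes on a set of positive measure, then m = 0 a.e. -/
open MeasureTheory

/-- If `m : Γ̂ → ℕ` satisfies the consistency equation
`m ω = ∑_{A ζ = ω} m ζ` a.e., `A = α*` is ergodic with respect to Haar measure,
and `m` vanishes on a set of positive measure, then `m = 0` a.e. -/
theorem stmt3 {G : Type*} [TopologicalSpace G] [CommGroup G] [IsTopologicalGroup G]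
    [CompactSpace G] [MeasurableSpace G] [BorelSpace G]
    (μ : Measure G) [μ.IsHaarMeasure]
    (A : G →* G) (hAmeas : Measurable A) (hAsurj : Function.Surjective A)
    (N : ℕ) (hN : 1 < N) (hker : Nat.card A.ker = N)
    (herg : Ergodic A μ)
    (m : G → ℕ) (hm : Measurable m)
    (hcons : ∀ᵐ ω ∂μ, m ω = ∑' ζ : {ζ : G // A ζ = ω}, m (ζ : G))
    (hvanish : 0 < μ {ω | m ω = 0}) :
    m =ᵐ[μ] 0 := by
  haveI : Finite A.ker := Nat.finite_of_card_ne_zero (by omega)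
  -- each fiber is finite
  have hfib : ∀ ω : G, Finite {ζ : G // A ζ = ω} := by
    intro ω
    obtain ⟨ζ₀, hζ₀⟩ := hAsurj ω
    have : {ζ : G // A ζ = ω} ≃ A.ker :=
      { toFun := fun ζ => ⟨(ζ : G) / ζ₀, by
          simp [MonoidHom.mem_ker, map_div, ζ.2, hζ₀]⟩
        invFun := fun k => ⟨ζ₀ * (k : G), by
          have := k.2
          rw [MonoidHom.mem_ker] at this
          simp [map_mul, this, hζ₀]⟩
        left_inv := fun ζ => by simp
        right_inv := fun k => by simp }
    exact Finite.of_equiv _ this.symm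
  set S : Set G := {ω | m ω = 0} with hS
  have hSmeas : MeasurableSet S := hm (measurableSet_singleton 0)
  -- a.e. pullback of the consistency equation
  have hpull : ∀ᵐ ζ ∂μ, m (A ζ) = ∑' ξ : {ξ : G // A ξ = A ζ}, m (ξ : G) :=
    herg.toMeasurePreserving.quasiMeasurePreserving.ae hcons
  have hsub : A ⁻¹' S ≤ᵐ[μ] S := by
    filter_upwards [hpull] with ζ hζ hζS
    have hAz : m (A ζ) = 0 := hζS
    haveI := hfib (A ζ)
    have hsummable : Summable (fun ξ : {ξ : G // A ξ = A ζ} => m (ξ : G)) :=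
      Summable.of_finite
    have hle : m ζ ≤ ∑' ξ : {ξ : G // A ξ = A ζ}, m (ξ : G) :=
      Summable.le_tsum' hsummable ⟨ζ, rfl⟩
    have : m ζ ≤ 0 := by
      calc m ζ ≤ _ := hle
        _ = m (A ζ) := hζ.symm
        _ = 0 := hAz
    exact Nat.le_zero.mp this
  have hfin : μ S ≠ ⊤ := measure_ne_top μ S
  rcases herg.ae_empty_or_univ_of_preimage_ae_le' hSmeas.nullMeasurableSet hsub hfin with h | h
  · exact absurd (measure_congr h) (by simpa using hvanish.ne')
  · have : μ Sᶜ = 0 := MeasureTheory.ae_eq_univ.mp h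
    rw [Filter.EventuallyEq, ae_iff]
    convert this using 2
    ext x
    simp [hS]
end

section
/- Let H be a filter relative to m and α* whose Ruelle operator S_H on ⊕_i L²(σ_i) has a unimodular eigenvector, i.e., there exist F ∈ ⊕ L²(σ_i) and λ ∈ ℂ with |λ| = 1, ‖F(ω)‖ = 1 a.e., and Hᵗ(ω) F(α*(ω)) = λ F(ω) a.e. Then H is equivalent to an eigenfilter: there is a unitary-valued A with H'(ω) = A(α*(ω)) H(ω) A*(ω) satisfying H'₁₁(ω) = λ and H'₁ⱼ(ω) = 0 for j > 1, a.e. -/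
open MeasureTheory

open Finset in
noncomputable def hsAlpha (z : ℂ) : ℂ := if z = 0 then 1 else z / ‖z‖
noncomputable def hsW (v : ℕ → ℂ) (i : ℕ) : ℂ := v i + if i = 0 then hsAlpha (v 0) else 0
noncomputable def hsC (v : ℕ → ℂ) : ℂ := ((2 + 2 * ‖v 0‖ : ℝ) : ℂ)
noncomputable def hsMat (v : ℕ → ℂ) (n : ℕ) (i j : ℕ) : ℂ :=
  if i < n ∧ j < n then
    -hsAlpha (v 0) * ((if i = j then 1 else 0) - 2 * hsW v j * (starRingEnd ℂ) (hsW v i) / hsC v)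
  else 0

lemma hsAlpha_mul (z : ℂ) : (starRingEnd ℂ) (hsAlpha z) * hsAlpha z = 1 := by
  unfold hsAlpha
  split_ifs with h
  · simp
  · have hz : (‖z‖ : ℂ) ≠ 0 := by simpa using norm_ne_zero_iff.mpr h
    have e : (starRingEnd ℂ) (z / ‖z‖) * (z / ‖z‖) = ((starRingEnd ℂ) z * z) / (‖z‖:ℂ)^2 := by
      rw [map_div₀, Complex.conj_ofReal]; ring
    rw [e, mul_comm, Complex.mul_conj']
    exact div_self (pow_ne_zero 2 hz)

lemma hsAlpha_conj_mul (z : ℂ) : (starRingEnd ℂ) (hsAlpha z) * z = (‖z‖ : ℂ) := by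
  unfold hsAlpha
  split_ifs with h
  · simp [h]
  · have hz : (‖z‖ : ℂ) ≠ 0 := by simpa using norm_ne_zero_iff.mpr h
    rw [map_div₀, Complex.conj_ofReal, div_mul_eq_mul_div, mul_comm, Complex.mul_conj', sq,
      mul_div_assoc, div_self hz, mul_one]

lemma hsAlpha_mul_conj (v : ℕ → ℂ) : hsAlpha (v 0) * (starRingEnd ℂ) (v 0) = (‖v 0‖ : ℂ) := by
  have h3 := congrArg (starRingEnd ℂ) (hsAlpha_conj_mul (v 0))
  rwa [map_mul, Complex.conj_conj, Complex.conj_ofReal] at h3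

lemma hsC_ne (v : ℕ → ℂ) : hsC v ≠ 0 := by
  have h : (0:ℝ) < 2 + 2 * ‖v 0‖ := by positivity
  simpa [hsC] using Complex.ofReal_ne_zero.mpr h.ne'

lemma hsC_conj (v : ℕ → ℂ) : (starRingEnd ℂ) (hsC v) = hsC v := Complex.conj_ofReal _

lemma hsW_sum (v : ℕ → ℂ) (n : ℕ) (hn : 0 < n)
    (hnorm : ∑ i ∈ Finset.range n, v i * (starRingEnd ℂ) (v i) = 1) :
    ∑ k ∈ Finset.range n, hsW v k * (starRingEnd ℂ) (hsW v k) = hsC v := by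
  have expand : ∀ k, hsW v k * (starRingEnd ℂ) (hsW v k)
      = v k * (starRingEnd ℂ) (v k)
        + (if k = 0 then (starRingEnd ℂ) (hsAlpha (v 0)) * v 0
            + hsAlpha (v 0) * (starRingEnd ℂ) (v 0)
            + (starRingEnd ℂ) (hsAlpha (v 0)) * hsAlpha (v 0) else 0) := by
    intro k
    unfold hsW
    split_ifs with h
    · rw [map_add]; subst h; ring
    · simp
  rw [Finset.sum_congr rfl (fun k _ => expand k), Finset.sum_add_distrib, hnorm,
    Finset.sum_ite_eq' (Finset.range n) 0]
  rw [if_pos (Finset.mem_range.mpr hn), hsAlpha_conj_mul, hsAlpha_mul, hsAlpha_mul_conj]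
  unfold hsC
  push_cast
  ring

lemma gen_orth (x y : ℕ → ℂ) (n i j : ℕ) (hi : i < n) (hj : j < n) (c : ℂ) (hc : c ≠ 0)
    (hsum : ∑ k ∈ Finset.range n, x k * y k = c) :
    ∑ k ∈ Finset.range n, ((if i = k then 1 else 0) - 2 * x k * y i / c)
      * ((if j = k then 1 else 0) - 2 * y k * x j / c) = if i = j then 1 else 0 := by
  have expand : ∀ k, ((if i = k then 1 else 0) - 2 * x k * y i / c)
      * ((if j = k then 1 else 0) - 2 * y k * x j / c)
      = (if i = k then (if j = k then 1 else 0) else 0)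
        - (if i = k then 2 * y k * x j / c else 0)
        - (if j = k then 2 * x k * y i / c else 0)
        + (y i * x j * 4 / c ^ 2) * (x k * y k) := by
    intro k
    split_ifs <;> ring
  rw [Finset.sum_congr rfl (fun k _ => expand k), Finset.sum_add_distrib,
    Finset.sum_sub_distrib, Finset.sum_sub_distrib, ← Finset.mul_sum, hsum,
    Finset.sum_ite_eq (Finset.range n) i, Finset.sum_ite_eq (Finset.range n) i,
    Finset.sum_ite_eq (Finset.range n) j, if_pos (Finset.mem_range.mpr hi),
    if_pos (Finset.mem_range.mpr hi), if_pos (Finset.mem_range.mpr hj)]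
  have key : y i * x j * 4 / c ^ 2 * c = 2 * y i * x j / c + 2 * x j * y i / c := by
    field_simp; ring
  have hji : (if j = i then (1:ℂ) else 0) = if i = j then 1 else 0 := by simp [eq_comm]
  rw [hji, key]
  ring

lemma hsAlpha_mul' (z : ℂ) : hsAlpha z * (starRingEnd ℂ) (hsAlpha z) = 1 := by
  rw [mul_comm]; exact hsAlpha_mul z

lemma hsMat_row0 (v : ℕ → ℂ) (n : ℕ) (hn : 0 < n) (j : ℕ) (hj : j < n) :
    hsMat v n 0 j = v j := by
  have hc := hsC_ne v
  have hkey : 2 * (hsAlpha (v 0) * (starRingEnd ℂ) (hsW v 0)) = hsC v := by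
    have hw : hsW v 0 = v 0 + hsAlpha (v 0) := by simp [hsW]
    rw [hw, map_add, mul_add, hsAlpha_mul_conj v, hsAlpha_mul']
    unfold hsC; push_cast; ring
  unfold hsMat
  rw [if_pos ⟨hn, hj⟩]
  have main : -hsAlpha (v 0) * ((if (0:ℕ) = j then 1 else 0)
        - 2 * hsW v j * (starRingEnd ℂ) (hsW v 0) / hsC v)
      = -hsAlpha (v 0) * (if (0:ℕ) = j then 1 else 0)
        + hsW v j * (2 * (hsAlpha (v 0) * (starRingEnd ℂ) (hsW v 0))) / hsC v := by
    ring
  rw [main, hkey, mul_div_assoc, div_self hc, mul_one]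
  rcases eq_or_ne j 0 with h0 | h0
  · subst h0
    rw [if_pos rfl]
    have hw : hsW v 0 = v 0 + hsAlpha (v 0) := by simp [hsW]
    rw [hw]
    ring
  · rw [if_neg (fun h => h0 h.symm)]
    simp only [hsW, if_neg h0]
    ring

lemma hsMat_row_orth (v : ℕ → ℂ) (n : ℕ) (hn : 0 < n)
    (hnorm : ∑ i ∈ Finset.range n, v i * (starRingEnd ℂ) (v i) = 1) (i j : ℕ) :
    ∑ k ∈ Finset.range n, hsMat v n i k * (starRingEnd ℂ) (hsMat v n j k)
      = if i = j ∧ i < n then 1 else 0 := by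
  by_cases hi : i < n
  · by_cases hj : j < n
    · have hterm : ∀ k ∈ Finset.range n, hsMat v n i k * (starRingEnd ℂ) (hsMat v n j k)
          = ((if i = k then 1 else 0) - 2 * hsW v k * (starRingEnd ℂ) (hsW v i) / hsC v)
            * ((if j = k then 1 else 0) - 2 * (starRingEnd ℂ) (hsW v k) * hsW v j / hsC v) := by
        intro k hk
        have hk' := Finset.mem_range.mp hk
        unfold hsMat
        rw [if_pos (show i < n ∧ k < n from ⟨hi, hk'⟩), if_pos (show j < n ∧ k < n from ⟨hj, hk'⟩)]
        simp only [map_mul, map_sub, map_neg, map_div₀, map_ofNat, Complex.conj_conj,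
          hsC_conj, apply_ite (starRingEnd ℂ), map_one, map_zero]
        linear_combination (((if i = k then (1:ℂ) else 0) - 2 * hsW v k * (starRingEnd ℂ) (hsW v i) / hsC v)
          * ((if j = k then (1:ℂ) else 0) - 2 * (starRingEnd ℂ) (hsW v k) * hsW v j / hsC v)) * hsAlpha_mul (v 0)
      rw [Finset.sum_congr rfl hterm,
        gen_orth (hsW v) (fun k => (starRingEnd ℂ) (hsW v k)) n i j hi hj (hsC v) (hsC_ne v)
          (hsW_sum v n hn hnorm)]
      simp [hi]
    · have : ∀ k ∈ Finset.range n, hsMat v n i k * (starRingEnd ℂ) (hsMat v n j k) = 0 := by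
        intro k hk
        have : hsMat v n j k = 0 := by unfold hsMat; rw [if_neg (fun h => hj h.1)]
        rw [this, map_zero, mul_zero]
      rw [Finset.sum_eq_zero this, eq_comm, if_neg]
      rintro ⟨rfl, h2⟩; exact hj h2
  · have : ∀ k ∈ Finset.range n, hsMat v n i k * (starRingEnd ℂ) (hsMat v n j k) = 0 := by
      intro k hk
      have : hsMat v n i k = 0 := by unfold hsMat; rw [if_neg (fun h => hi h.1)]
      rw [this, zero_mul]
    rw [Finset.sum_eq_zero this, eq_comm, if_neg]
    rintro ⟨rfl, h2⟩; exact hi h2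

lemma hsMat_col_orth (v : ℕ → ℂ) (n : ℕ) (hn : 0 < n)
    (hnorm : ∑ i ∈ Finset.range n, v i * (starRingEnd ℂ) (v i) = 1) (i j : ℕ) :
    ∑ k ∈ Finset.range n, (starRingEnd ℂ) (hsMat v n k i) * hsMat v n k j
      = if i = j ∧ i < n then 1 else 0 := by
  by_cases hi : i < n
  · by_cases hj : j < n
    · have hterm : ∀ k ∈ Finset.range n, (starRingEnd ℂ) (hsMat v n k i) * hsMat v n k j
          = ((if i = k then 1 else 0) - 2 * hsW v k * (starRingEnd ℂ) (hsW v i) / hsC v)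
            * ((if j = k then 1 else 0) - 2 * (starRingEnd ℂ) (hsW v k) * hsW v j / hsC v) := by
        intro k hk
        have hk' := Finset.mem_range.mp hk
        unfold hsMat
        rw [if_pos (show k < n ∧ i < n from ⟨hk', hi⟩), if_pos (show k < n ∧ j < n from ⟨hk', hj⟩)]
        simp only [map_mul, map_sub, map_neg, map_div₀, map_ofNat, Complex.conj_conj,
          hsC_conj, apply_ite (starRingEnd ℂ), map_one, map_zero]
        have hik : (if k = i then (1:ℂ) else 0) = if i = k then 1 else 0 := by simp [eq_comm]
        have hjk : (if k = j then (1:ℂ) else 0) = if j = k then 1 else 0 := by simp [eq_comm]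
        rw [hik, hjk]
        linear_combination (((if i = k then (1:ℂ) else 0) - 2 * hsW v k * (starRingEnd ℂ) (hsW v i) / hsC v)
          * ((if j = k then (1:ℂ) else 0) - 2 * (starRingEnd ℂ) (hsW v k) * hsW v j / hsC v)) * hsAlpha_mul (v 0)
      rw [Finset.sum_congr rfl hterm,
        gen_orth (hsW v) (fun k => (starRingEnd ℂ) (hsW v k)) n i j hi hj (hsC v) (hsC_ne v)
          (hsW_sum v n hn hnorm)]
      simp [hi]
    · have : ∀ k ∈ Finset.range n, (starRingEnd ℂ) (hsMat v n k i) * hsMat v n k j = 0 := by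
        intro k hk
        have : hsMat v n k j = 0 := by unfold hsMat; rw [if_neg (fun h => hj h.2)]
        rw [this, mul_zero]
      rw [Finset.sum_eq_zero this, eq_comm, if_neg]
      rintro ⟨rfl, h2⟩; exact hj h2
  · have : ∀ k ∈ Finset.range n, (starRingEnd ℂ) (hsMat v n k i) * hsMat v n k j = 0 := by
      intro k hk
      have : hsMat v n k i = 0 := by unfold hsMat; rw [if_neg (fun h => hi h.2)]
      rw [this, map_zero, zero_mul]
    rw [Finset.sum_eq_zero this, eq_comm, if_neg]
    rintro ⟨rfl, h2⟩; exact hi h2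

/-- if the Ruelle operator `S_H` of a filter `H` (relative to `m` and
`α* = A`) has a unimodular eigenvector, i.e. there are `F ∈ ⊕ L²(σ_i)` and `λ ∈ ℂ` with
`|λ| = 1`, `‖F ω‖ = 1` a.e., and `Hᵗ(ω) F(A ω) = λ F(ω)` a.e., then `H` is equivalent to
an eigenfilter: there is a measurable block-unitary `Amat` such that
`H'(ω) = Amat(A ω) H(ω) Amat(ω)*` satisfies `H'₁₁ = λ` and `H'₁ⱼ = 0` for `j > 1` a.e. -/
theorem stmt8 {G : Type*} [TopologicalSpace G] [CommGroup G] [IsTopologicalGroup G]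
    [CompactSpace G] [MeasurableSpace G] [BorelSpace G]
    (μ : Measure G) [μ.IsHaarMeasure]
    (A : G →* G) (hAmeas : Measurable A) (hAsurj : Function.Surjective A)
    (N : ℕ) (hN : 1 < N) (hker : Nat.card A.ker = N)
    (hpres : MeasurePreserving A μ μ)
    (m : G → ℕ) (hm : Measurable m)
    (H : G → ℕ → ℕ → ℂ) (hHmeas : ∀ i j, Measurable fun ω => H ω i j)
    (hHsupp : ∀ ω i j, m (A ω) ≤ i ∨ m ω ≤ j → H ω i j = 0)
    (hfilt : ∀ᵐ ω ∂μ, ∀ i j, (∑' ζ : {ζ : G // A ζ = ω}, ∑' k : ℕ,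
        H (ζ : G) i k * (starRingEnd ℂ) (H (ζ : G) j k))
      = if i = j ∧ i < m ω then (N : ℂ) else 0)
    -- the unimodular eigenvector:
    (F : G → ℕ → ℂ) (hFmeas : ∀ i, Measurable fun ω => F ω i)
    (hFsupp : ∀ ω i, m ω ≤ i → F ω i = 0)
    (hFnorm : ∀ᵐ ω ∂μ, (∑' i : ℕ, ‖F ω i‖ ^ 2) = 1)
    (lam : ℂ) (hlam : ‖lam‖ = 1)
    (heig : ∀ᵐ ω ∂μ, ∀ i : ℕ, (∑' j : ℕ, H ω j i * F (A ω) j) = lam * F ω i) :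
    ∃ Amat H' : G → ℕ → ℕ → ℂ,
      (∀ i j, Measurable fun ω => Amat ω i j) ∧
      -- `Amat(ω) = diag(A₁(ω), 0)` with `A₁(ω)` unitary of dimension `m ω`:
      (∀ ω i j, m ω ≤ i ∨ m ω ≤ j → Amat ω i j = 0) ∧
      (∀ᵐ ω ∂μ, ∀ i j, (∑' k : ℕ, Amat ω i k * (starRingEnd ℂ) (Amat ω j k))
        = if i = j ∧ i < m ω then 1 else 0) ∧
      (∀ᵐ ω ∂μ, ∀ i j, (∑' k : ℕ, (starRingEnd ℂ) (Amat ω k i) * Amat ω k j)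
        = if i = j ∧ i < m ω then 1 else 0) ∧
      -- `H' = Amat∘A · H · Amat*` is the equivalent filter:
      (∀ ω i j, H' ω i j
        = ∑' k : ℕ, ∑' l : ℕ, Amat (A ω) i k * H ω k l * (starRingEnd ℂ) (Amat ω j l)) ∧
      -- and `H'` is an eigenfilter with eigenvalue `λ`:
      (∀ᵐ ω ∂μ, H' ω 0 0 = lam ∧ ∀ j : ℕ, 0 < j → H' ω 0 j = 0) := by
  classical
  -- the key pointwise consequence of the normalization hypothesis
  have key : ∀ ω, (∑' i : ℕ, ‖F ω i‖ ^ 2) = 1 →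
      0 < m ω ∧ (∑ i ∈ Finset.range (m ω), F ω i * (starRingEnd ℂ) (F ω i)) = 1 := by
    intro ω hω
    have hts : (∑' i : ℕ, ‖F ω i‖ ^ 2) = ∑ i ∈ Finset.range (m ω), ‖F ω i‖ ^ 2 :=
      tsum_eq_sum (fun b hb => by rw [hFsupp ω b (by simpa using hb)]; simp)
    have hpos : 0 < m ω := by
      by_contra h
      push_neg at h
      rw [hts] at hω
      simp [Nat.le_zero.mp h] at hω
    refine ⟨hpos, ?_⟩
    have he : ∀ i, F ω i * (starRingEnd ℂ) (F ω i) = ((‖F ω i‖ ^ 2 : ℝ) : ℂ) := by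
      intro i; rw [Complex.mul_conj']; push_cast; ring
    rw [Finset.sum_congr rfl (fun i _ => he i), ← Complex.ofReal_sum, ← hts, hω]
    norm_num
  -- zero entries of the matrix outside the block
  have hzero : ∀ ω i j, m ω ≤ i ∨ m ω ≤ j → hsMat (F ω) (m ω) i j = 0 := by
    intro ω i j h
    unfold hsMat
    rw [if_neg]
    rintro ⟨h1, h2⟩
    rcases h with h | h <;> omega
  refine ⟨fun ω => hsMat (F ω) (m ω),
    fun ω i j => ∑' k : ℕ, ∑' l : ℕ,
      hsMat (F (A ω)) (m (A ω)) i k * H ω k l * (starRingEnd ℂ) (hsMat (F ω) (m ω) j l),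
    ?_, ?_, ?_, ?_, fun ω i j => rfl, ?_⟩
  · -- measurability
    intro i j
    have halpha : Measurable fun ω => hsAlpha (F ω 0) := by
      unfold hsAlpha
      exact Measurable.ite ((hFmeas 0) (measurableSet_singleton 0)) measurable_const
        ((hFmeas 0).div (Complex.measurable_ofReal.comp (hFmeas 0).norm))
    have hw : ∀ k, Measurable fun ω => hsW (F ω) k := by
      intro k
      unfold hsW
      by_cases hk : k = 0
      · simp only [hk, if_pos rfl]
        exact (hFmeas 0).add halpha
      · simp only [if_neg hk]
        exact (hFmeas k).add measurable_const
    have hcm : Measurable fun ω => hsC (F ω) := by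
      unfold hsC
      exact Complex.measurable_ofReal.comp
        (measurable_const.add (measurable_const.mul (hFmeas 0).norm))
    have hconj : ∀ {f : G → ℂ}, Measurable f → Measurable fun ω => (starRingEnd ℂ) (f ω) :=
      fun hf => Complex.continuous_conj.measurable.comp hf
    unfold hsMat
    refine Measurable.ite ((measurableSet_lt measurable_const hm).inter
      (measurableSet_lt measurable_const hm)) ?_ measurable_const
    exact (halpha.neg).mul ((measurable_const.sub
      (((measurable_const.mul (hw j)).mul (hconj (hw i))).div hcm)))
  · -- support
    exact hzero
  · -- row orthonormality
    filter_upwards [hFnorm] with ω hω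
    intro i j
    obtain ⟨hpos, hnormC⟩ := key ω hω
    rw [tsum_eq_sum (s := Finset.range (m ω)) (fun k hk => by
      rw [hzero ω i k (Or.inr (by simpa using hk)), zero_mul])]
    exact hsMat_row_orth (F ω) (m ω) hpos hnormC i j
  · -- column orthonormality
    filter_upwards [hFnorm] with ω hω
    intro i j
    obtain ⟨hpos, hnormC⟩ := key ω hω
    rw [tsum_eq_sum (s := Finset.range (m ω)) (fun k hk => by
      rw [hzero ω k j (Or.inl (by simpa using hk)), mul_zero])]
    exact hsMat_col_orth (F ω) (m ω) hpos hnormC i j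
  · -- eigenfilter property
    filter_upwards [hFnorm, hpres.quasiMeasurePreserving.ae hFnorm, heig] with ω hω hωA heigω
    obtain ⟨hpos, hnormC⟩ := key ω hω
    obtain ⟨hposA, hnormCA⟩ := key (A ω) hωA
    have main : ∀ j, (∑' k : ℕ, ∑' l : ℕ,
        hsMat (F (A ω)) (m (A ω)) 0 k * H ω k l * (starRingEnd ℂ) (hsMat (F ω) (m ω) j l))
        = lam * (if 0 = j ∧ 0 < m ω then 1 else 0) := by
      intro j
      have inner : ∀ k, (∑' l : ℕ, hsMat (F (A ω)) (m (A ω)) 0 k * H ω k l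
            * (starRingEnd ℂ) (hsMat (F ω) (m ω) j l))
          = ∑ l ∈ Finset.range (m ω), hsMat (F (A ω)) (m (A ω)) 0 k * H ω k l
            * (starRingEnd ℂ) (hsMat (F ω) (m ω) j l) := by
        intro k
        refine tsum_eq_sum (fun l hl => ?_)
        rw [hHsupp ω k l (Or.inr (by simpa using hl)), mul_zero, zero_mul]
      rw [tsum_congr inner]
      rw [tsum_eq_sum (s := Finset.range (m (A ω))) (fun k hk => Finset.sum_eq_zero (fun l _ => by
        rw [hzero (A ω) 0 k (Or.inr (by simpa using hk)), zero_mul, zero_mul]))]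
      rw [Finset.sum_comm]
      have step1 : ∀ l ∈ Finset.range (m ω),
          (∑ k ∈ Finset.range (m (A ω)), hsMat (F (A ω)) (m (A ω)) 0 k * H ω k l
            * (starRingEnd ℂ) (hsMat (F ω) (m ω) j l))
          = (lam * F ω l) * (starRingEnd ℂ) (hsMat (F ω) (m ω) j l) := by
        intro l _
        rw [← Finset.sum_mul]
        congr 1
        have hre : ∀ k ∈ Finset.range (m (A ω)),
            hsMat (F (A ω)) (m (A ω)) 0 k * H ω k l = H ω k l * F (A ω) k := by
          intro k hk
          rw [hsMat_row0 (F (A ω)) (m (A ω)) hposA k (Finset.mem_range.mp hk)]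
          ring
        rw [Finset.sum_congr rfl hre, ← tsum_eq_sum (L := SummationFilter.unconditional ℕ) (fun k hk => by
          rw [hHsupp ω k l (Or.inl (by simpa using hk)), zero_mul]), heigω l]
      rw [Finset.sum_congr rfl step1]
      have step2 : ∑ l ∈ Finset.range (m ω),
          (lam * F ω l) * (starRingEnd ℂ) (hsMat (F ω) (m ω) j l)
          = lam * ∑ l ∈ Finset.range (m ω),
              hsMat (F ω) (m ω) 0 l * (starRingEnd ℂ) (hsMat (F ω) (m ω) j l) := by
        rw [Finset.mul_sum]
        refine Finset.sum_congr rfl (fun l hl => ?_)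
        rw [hsMat_row0 (F ω) (m ω) hpos l (Finset.mem_range.mp hl)]
        ring
      rw [step2, hsMat_row_orth (F ω) (m ω) hpos hnormC 0 j]
    constructor
    · rw [main 0, if_pos ⟨rfl, hpos⟩, mul_one]
    · intro j hj
      rw [main j, if_neg (by rintro ⟨h0, _⟩; omega), mul_zero]
end

section
/- If H' is an eigenfilter with eigenvalue λ and H'(ω) A(ω) = A(α*(ω)) H(ω) for a measurable A of the form diag(A₁, 0) with A₁(ω) unitary, then the first row F(ω) of A(ω) satisfies Hᵗ(ω) F(α*(ω)) = λ F(ω) with ‖F(ω)‖ = 1 a.e.; hence S_H has a unimodular eigenvector and is not a pure isometry. -/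
open MeasureTheory

/-- if `H'` is an eigenfilter with eigenvalue `λ` and
`H'(ω) Amat(ω) = Amat(A ω) H(ω)` for a measurable `Amat = diag(A₁, 0)` with `A₁(ω)`
unitary of dimension `m ω`, then the first row `F(ω) = (Amat(ω))_{row 1}` is a unimodular
eigenvector of the Ruelle operator `S_H`: `Hᵗ(ω) F(A ω) = λ F(ω)` and `‖F ω‖ = 1` a.e.
(hence, by the Baggett–Furst–Merrill–Packer criterion, `S_H` is not a pure isometry). -/
theorem stmt9 {G : Type*} [TopologicalSpace G] [CommGroup G] [IsTopologicalGroup G]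
    [CompactSpace G] [MeasurableSpace G] [BorelSpace G]
    (μ : Measure G) [μ.IsHaarMeasure]
    (A : G →* G) (hAmeas : Measurable A) (hAsurj : Function.Surjective A)
    (N : ℕ) (hN : 1 < N) (hker : Nat.card A.ker = N)
    (hpres : MeasurePreserving A μ μ)
    (m : G → ℕ) (hm : Measurable m) (hm1 : ∀ᵐ ω ∂μ, 1 ≤ m ω)
    (H : G → ℕ → ℕ → ℂ) (hHmeas : ∀ i j, Measurable fun ω => H ω i j)
    (hHsupp : ∀ ω i j, m (A ω) ≤ i ∨ m ω ≤ j → H ω i j = 0)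
    (H' : G → ℕ → ℕ → ℂ) (hH'supp : ∀ ω i j, m (A ω) ≤ i ∨ m ω ≤ j → H' ω i j = 0)
    -- `H'` is an eigenfilter with eigenvalue `λ`, `|λ| = 1`:
    (lam : ℂ) (hlam : ‖lam‖ = 1)
    (heigf : ∀ᵐ ω ∂μ, H' ω 0 0 = lam ∧ ∀ j : ℕ, 0 < j → H' ω 0 j = 0)
    (Amat : G → ℕ → ℕ → ℂ) (hAmatmeas : ∀ i j, Measurable fun ω => Amat ω i j)
    -- `Amat(ω) = diag(A₁(ω), 0)` with `A₁(ω)` unitary of dimension `m ω`: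
    (hAblock : ∀ ω i j, m ω ≤ i ∨ m ω ≤ j → Amat ω i j = 0)
    (hArows : ∀ᵐ ω ∂μ, ∀ i j, (∑' k : ℕ, Amat ω i k * (starRingEnd ℂ) (Amat ω j k))
      = if i = j ∧ i < m ω then 1 else 0)
    (hAcols : ∀ᵐ ω ∂μ, ∀ i j, (∑' k : ℕ, (starRingEnd ℂ) (Amat ω k i) * Amat ω k j)
      = if i = j ∧ i < m ω then 1 else 0)
    -- the intertwining `H'(ω) Amat(ω) = Amat(A ω) H(ω)`:
    (hintw : ∀ᵐ ω ∂μ, ∀ i j, (∑' k : ℕ, H' ω i k * Amat ω k j)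
      = ∑' k : ℕ, Amat (A ω) i k * H ω k j) :
    -- the first row of `Amat` is a unimodular eigenvector of `S_H`:
    ∃ F : G → ℕ → ℂ,
      (∀ ω i, F ω i = Amat ω 0 i) ∧
      (∀ᵐ ω ∂μ, (∑' i : ℕ, ‖F ω i‖ ^ 2) = 1) ∧
      (∀ᵐ ω ∂μ, ∀ i : ℕ, (∑' j : ℕ, H ω j i * F (A ω) j) = lam * F ω i) := by
  refine ⟨fun ω i => Amat ω 0 i, fun _ _ => rfl, ?_, ?_⟩
  · filter_upwards [hArows, hm1] with ω hr h1
    have h := hr 0 0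
    rw [if_pos ⟨rfl, h1⟩] at h
    have : (∑' k : ℕ, Amat ω 0 k * (starRingEnd ℂ) (Amat ω 0 k))
        = ((∑' k : ℕ, ‖Amat ω 0 k‖ ^ 2 : ℝ) : ℂ) := by
      rw [Complex.ofReal_tsum]
      refine tsum_congr fun k => ?_
      rw [Complex.mul_conj']
      push_cast
      ring
    rw [this] at h
    exact_mod_cast h
  · filter_upwards [hintw, heigf] with ω hi he
    intro i
    have h := hi 0 i
    rw [tsum_eq_single 0 (fun k hk => by rw [he.2 k (Nat.pos_of_ne_zero hk), zero_mul])] at h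
    rw [he.1] at h
    calc (∑' j : ℕ, H ω j i * Amat (A ω) 0 j)
        = ∑' j : ℕ, Amat (A ω) 0 j * H ω j i := tsum_congr fun j => mul_comm _ _
      _ = lam * Amat ω 0 i := h.symm
end
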